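/- If g₁, g₂, g₃ are permutations of a 100-element set with g₁g₂g₃ = 1, where g₁ has cycle type 1²⁰2⁴⁰ (20 fixed points and 40 transpositions), g₂ has cycle type 1⁴3³² (4 fixed points and 32 three-cycles), and g₃ has cycle type 1²7¹⁴ (2 fixed points and 14 seven-cycles), then the group generated by g₁, g₂, g₃ is not transitive on the 100 points. -/

import Mathlib

open LinearMap Module Equiv

section aux
variable {X : Type*} [Fintype X] [DecidableEq X]

omit [Fintype X] [DecidableEq X] in
lemma eval_li {ι : Type*} (w : ι → X → ℚ) (p : ι → X)
    (h1 : ∀ i, w i (p i) = 1) (h0 : ∀ i j, j ≠ i → w j (p i) = 0) :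
    LinearIndependent ℚ w := by
  rw [linearIndependent_iff']
  intro s g hsum i hi
  have h := congrFun hsum (p i)
  simp only [Finset.sum_apply, Pi.smul_apply, smul_eq_mul, Pi.zero_apply] at h
  rw [Finset.sum_eq_single i (fun j _ hj => by rw [h0 i j hj, mul_zero])
      (fun h' => absurd hi h'), h1 i, mul_one] at h
  exact h

def Pmap (σ : Equiv.Perm X) : (X → ℚ) →ₗ[ℚ] (X → ℚ) := LinearMap.funLeft ℚ ℚ σ

lemma Pmap_mul (g h : Equiv.Perm X) : Pmap (g * h) = (Pmap h).comp (Pmap g) := rfl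

@[simp] lemma Pmap_apply (σ : Equiv.Perm X) (f : X → ℚ) (t : X) :
    Pmap σ f t = f (σ t) := rfl

lemma card_cycleFactorsFinset (σ : Equiv.Perm X) :
    σ.cycleFactorsFinset.card = Multiset.card σ.cycleType := by
  rw [Equiv.Perm.cycleType_def, Multiset.card_map]; rfl

lemma ker_lb (σ : Equiv.Perm X) :
    (Fintype.card X - σ.support.card) + σ.cycleFactorsFinset.card
      ≤ finrank ℚ (LinearMap.ker (Pmap σ - LinearMap.id)) := by
  classical
  have hne : ∀ c : ↥σ.cycleFactorsFinset, (c : Equiv.Perm X).support.Nonempty := by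
    intro c
    rw [Finset.nonempty_iff_ne_empty]
    intro h
    exact (Equiv.Perm.mem_cycleFactorsFinset_iff.mp c.2).1.ne_one
      (Equiv.Perm.support_eq_empty_iff.mp h)
  set w : (↥σ.supportᶜ) ⊕ (↥σ.cycleFactorsFinset) → X → ℚ :=
    Sum.elim (fun x => Pi.single (x : X) 1)
      (fun c => fun t => if t ∈ (c : Equiv.Perm X).support then 1 else 0) with hw
  set p : (↥σ.supportᶜ) ⊕ (↥σ.cycleFactorsFinset) → X :=
    Sum.elim (fun x => (x : X)) (fun c => (hne c).choose) with hp
  have hinv : ∀ c : ↥σ.cycleFactorsFinset, ∀ t : X,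
      σ t ∈ (c : Equiv.Perm X).support ↔ t ∈ (c : Equiv.Perm X).support := by
    intro c t
    have hsub : ∀ u ∈ (c : Equiv.Perm X).support, σ u ∈ (c : Equiv.Perm X).support := by
      intro u hu
      rw [← (Equiv.Perm.mem_cycleFactorsFinset_iff.mp c.2).2 u hu]
      exact Equiv.Perm.apply_mem_support.mpr hu
    have himg : (c : Equiv.Perm X).support.image σ = (c : Equiv.Perm X).support :=
      Finset.eq_of_subset_of_card_le
        (fun y hy => by obtain ⟨u, hu, rfl⟩ := Finset.mem_image.mp hy; exact hsub u hu)
        (by rw [Finset.card_image_of_injective _ σ.injective])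
    constructor
    · intro h
      rw [← himg] at h
      obtain ⟨u, hu, huv⟩ := Finset.mem_image.mp h
      rwa [← σ.injective huv]
    · intro h; exact hsub t h
  have hmem : ∀ i, w i ∈ LinearMap.ker (Pmap σ - LinearMap.id) := by
    intro i
    rw [LinearMap.mem_ker]
    ext t
    simp only [LinearMap.sub_apply, LinearMap.id_apply, Pi.sub_apply, Pi.zero_apply, Pmap_apply]
    rcases i with x | c
    · have hfix : σ (x : X) = (x : X) := by
        have := x.2
        rw [Finset.mem_compl, Equiv.Perm.mem_support, not_not] at this
        exact this
      have hiff : σ t = (x : X) ↔ t = (x : X) := by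
        constructor
        · intro h; apply σ.injective; rw [h, hfix]
        · rintro rfl; exact hfix
      simp only [hw, Sum.elim_inl, Pi.single_apply]
      rw [if_congr hiff rfl rfl, sub_self]
    · simp only [hw, Sum.elim_inr]
      rw [if_congr (hinv c t) rfl rfl, sub_self]
  have h1 : ∀ i, w i (p i) = 1 := by
    rintro (x | c)
    · simp only [hw, hp, Sum.elim_inl, Pi.single_eq_same]
    · simp only [hw, hp, Sum.elim_inr]
      rw [if_pos (hne c).choose_spec]
  have h0 : ∀ i j, j ≠ i → w j (p i) = 0 := by
    rintro (x | c) (y | d) hne'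
    · have hyx : (x : X) ≠ (y : X) := fun h => hne' (congrArg Sum.inl (Subtype.ext h.symm))
      simp only [hw, hp, Sum.elim_inl, Pi.single_apply]
      rw [if_neg hyx]
    · have hx : (x : X) ∉ (d : Equiv.Perm X).support := fun h => by
        have := Equiv.Perm.mem_cycleFactorsFinset_support_le d.2 h
        have h2 := x.2
        rw [Finset.mem_compl] at h2
        exact h2 this
      simp only [hw, hp, Sum.elim_inl, Sum.elim_inr]
      rw [if_neg hx]
    · have hc : (hne c).choose ∈ σ.support :=
        Equiv.Perm.mem_cycleFactorsFinset_support_le c.2 (hne c).choose_spec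
      have hty : (hne c).choose ≠ (y : X) := by
        intro h
        have h2 := y.2
        rw [Finset.mem_compl] at h2
        exact h2 (h ▸ hc)
      simp only [hw, hp, Sum.elim_inl, Sum.elim_inr, Pi.single_apply]
      rw [if_neg hty]
    · have hdc : (d : Equiv.Perm X) ≠ (c : Equiv.Perm X) :=
        fun h => hne' (congrArg Sum.inr (Subtype.ext h))
      have hdisj : (d : Equiv.Perm X).Disjoint (c : Equiv.Perm X) :=
        (Equiv.Perm.cycleFactorsFinset_pairwise_disjoint σ) d.2 c.2 hdc
      have hcc : (hne c).choose ∉ (d : Equiv.Perm X).support := by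
        intro h
        have h2 := (hne c).choose_spec
        rcases hdisj ((hne c).choose) with h3 | h3
        · exact (Equiv.Perm.mem_support.mp h) h3
        · exact (Equiv.Perm.mem_support.mp h2) h3
      simp only [hw, hp, Sum.elim_inr]
      rw [if_neg hcc]
  have hli : LinearIndependent ℚ
      (fun i => (⟨w i, hmem i⟩ : LinearMap.ker (Pmap σ - LinearMap.id))) :=
    LinearIndependent.of_comp (LinearMap.ker (Pmap σ - LinearMap.id)).subtype
      (by exact eval_li w p h1 h0)
  have hcard := hli.fintype_card_le_finrank
  rwa [Fintype.card_sum, Fintype.card_coe, Fintype.card_coe, Finset.card_compl] at hcard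

end aux

set_option maxHeartbeats 1000000 in
theorem stmt_11 {X : Type*} [Fintype X] [DecidableEq X] (hX : Fintype.card X = 100)
    (g₁ g₂ g₃ : Equiv.Perm X) (hprod : g₁ * g₂ * g₃ = 1)
    (h₁ : g₁.cycleType = Multiset.replicate 40 2)
    (h₂ : g₂.cycleType = Multiset.replicate 32 3)
    (h₃ : g₃.cycleType = Multiset.replicate 14 7) :
    ¬ MulAction.IsPretransitive (Subgroup.closure ({g₁, g₂, g₃} : Set (Equiv.Perm X))) X := by
  intro htrans
  classical
  have hX0 : Nonempty X := by
    rw [← Fintype.card_pos_iff, hX]; norm_num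
  obtain ⟨x₀⟩ := hX0
  have hg : g₂ * g₃ = g₁⁻¹ := by
    rw [mul_assoc] at hprod
    exact eq_inv_of_mul_eq_one_right hprod
  set A := Pmap g₃ with hA
  set B := Pmap g₂ with hB
  set D := Pmap g₁⁻¹ with hD
  have hAB : A.comp B = D := by
    rw [hA, hB, hD, ← Pmap_mul, hg]
  set A' : (X → ℚ) →ₗ[ℚ] (X → ℚ) := A - LinearMap.id with hA'
  set B' : (X → ℚ) →ₗ[ℚ] (X → ℚ) := B - LinearMap.id with hB'
  set D' : (X → ℚ) →ₗ[ℚ] (X → ℚ) := D - LinearMap.id with hD'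
  set E : (X → ℚ) →ₗ[ℚ] (X → ℚ) := LinearMap.id - D with hE
  set SA := LinearMap.range A' with hSA
  set SB := LinearMap.range B' with hSB
  set SD := LinearMap.range D' with hSD
  set S := (SA ⊔ SB) ⊔ SD with hS'
  -- every (Pmap g f - f) for g in the closure lies in S
  have hS : ∀ g ∈ Subgroup.closure ({g₁, g₂, g₃} : Set (Equiv.Perm X)),
      ∀ f : X → ℚ, Pmap g f - f ∈ S := by
    intro g hgmem
    induction hgmem using Subgroup.closure_induction with
    | mem x hx =>
      simp only [Set.mem_insert_iff, Set.mem_singleton_iff] at hx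
      rcases hx with rfl | rfl | rfl
      · intro f
        have hDf : D (Pmap x f) = f := by
          ext t
          simp [hD, Equiv.Perm.inv_def]
        have key : Pmap x f - f = -(D' (Pmap x f)) := by
          rw [hD', LinearMap.sub_apply, LinearMap.id_apply, hDf]
          abel
        rw [key]
        exact S.neg_mem (Submodule.mem_sup_right ⟨Pmap x f, rfl⟩)
      · intro f
        exact Submodule.mem_sup_left (Submodule.mem_sup_right ⟨f, rfl⟩)
      · intro f
        exact Submodule.mem_sup_left (Submodule.mem_sup_left ⟨f, rfl⟩)
    | one =>
      intro f
      have : Pmap (1 : Equiv.Perm X) f - f = 0 := by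
        ext t; simp
      rw [this]; exact S.zero_mem
    | mul x y hx hy ihx ihy =>
      intro f
      have : Pmap (x * y) f - f = (Pmap y (Pmap x f) - Pmap x f) + (Pmap x f - f) := by
        rw [Pmap_mul]; simp
      rw [this]
      exact S.add_mem (ihy _) (ihx _)
    | inv x hx ihx =>
      intro f
      have h2 : Pmap x (Pmap x⁻¹ f) = f := by
        ext t; simp [Equiv.Perm.inv_def]
      have : Pmap x⁻¹ f - f = -(Pmap x (Pmap x⁻¹ f) - Pmap x⁻¹ f) := by
        rw [h2]; abel
      rw [this]
      exact S.neg_mem (ihx _)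
  -- S has dimension at least 99
  have h99S : 99 ≤ finrank ℚ S := by
    have hmem : ∀ b : {b : X // b ≠ x₀},
        (Pi.single (b : X) 1 - Pi.single x₀ 1 : X → ℚ) ∈ S := by
      intro b
      obtain ⟨g, hgx⟩ := MulAction.exists_smul_eq
        (Subgroup.closure ({g₁, g₂, g₃} : Set (Equiv.Perm X))) x₀ (b : X)
      have hgx' : (g : Equiv.Perm X) x₀ = (b : X) := hgx
      have hps : Pmap (g : Equiv.Perm X) (Pi.single (b : X) (1:ℚ)) = Pi.single x₀ 1 := by
        ext t
        have hiff : (g : Equiv.Perm X) t = (b : X) ↔ t = x₀ := by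
          constructor
          · intro h; apply (g : Equiv.Perm X).injective; rw [h, hgx']
          · rintro rfl; exact hgx'
        simp only [Pmap_apply, Pi.single_apply]
        rw [if_congr hiff rfl rfl]
      have := hS (g : Equiv.Perm X) g.2 (Pi.single (b : X) 1)
      rw [hps] at this
      have := S.neg_mem this
      rwa [neg_sub] at this
    have h1' : ∀ b : {b : X // b ≠ x₀},
        (Pi.single (b : X) 1 - Pi.single x₀ 1 : X → ℚ) (b : X) = 1 := by
      intro b
      simp only [Pi.sub_apply, Pi.single_eq_same, Pi.single_apply]
      rw [if_neg b.2, sub_zero]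
    have h0' : ∀ b b' : {b : X // b ≠ x₀}, b' ≠ b →
        (Pi.single (b' : X) 1 - Pi.single x₀ 1 : X → ℚ) (b : X) = 0 := by
      intro b b' hbb'
      have h1 : (b' : X) ≠ (b : X) := fun h => hbb' (Subtype.ext h)
      simp only [Pi.sub_apply, Pi.single_apply]
      rw [if_neg (fun h => h1 h.symm), if_neg b.2, sub_zero]
    have hli : LinearIndependent ℚ
        (fun b : {b : X // b ≠ x₀} =>
          (⟨Pi.single (b : X) 1 - Pi.single x₀ 1, hmem b⟩ : S)) :=
      LinearIndependent.of_comp S.subtype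
        (by exact eval_li (fun b : {b : X // b ≠ x₀} =>
          (Pi.single (b : X) 1 - Pi.single x₀ 1 : X → ℚ)) (fun b => (b : X)) h1' h0')
    have hcard := hli.fintype_card_le_finrank
    rwa [Fintype.card_subtype_compl, Fintype.card_subtype_eq, hX] at hcard
  -- the maps α and π
  have ha : ∀ v, (A'.comp B) v ∈ SA := fun v => ⟨B v, rfl⟩
  have hb : ∀ v, B' v ∈ SB := fun v => ⟨v, rfl⟩
  have hc : ∀ v, E v ∈ SD := fun v => ⟨-v, by
    rw [hD', hE]
    simp only [LinearMap.sub_apply, LinearMap.id_apply, map_neg]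
    abel⟩
  set α : (X → ℚ) →ₗ[ℚ] ((SA × SB) × SD) :=
    ((LinearMap.codRestrict SA (A'.comp B) ha).prod
      (LinearMap.codRestrict SB B' hb)).prod
      (LinearMap.codRestrict SD E hc) with hα
  set π : ((SA × SB) × SD) →ₗ[ℚ] (X → ℚ) :=
    (SA.subtype.coprod SB.subtype).coprod SD.subtype with hπ
  have hπα : π.comp α = 0 := by
    apply LinearMap.ext
    intro v
    have hABv : A (B v) = D v := by rw [← hAB]; rfl
    simp only [hπ, hα, hA', hB', hE, LinearMap.comp_apply, LinearMap.prod_apply, Function.prod,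
      LinearMap.coprod_apply, Submodule.coe_subtype, LinearMap.codRestrict_apply,
      LinearMap.sub_apply, LinearMap.id_apply, LinearMap.zero_apply]
    rw [hABv]
    abel
  -- ker α is at most one-dimensional
  have hkerα : finrank ℚ (LinearMap.ker α) ≤ 1 := by
    have hle : LinearMap.ker α ≤ Submodule.span ℚ {(1 : X → ℚ)} := by
      intro v hv
      rw [LinearMap.mem_ker] at hv
      have hb0 : B v = v := by
        have h := congrArg (fun z : ((SA × SB) × SD) => (z.1.2 : X → ℚ)) hv
        simp only [hα, hB', LinearMap.prod_apply, Function.prod, LinearMap.codRestrict_apply,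
          LinearMap.sub_apply, LinearMap.id_apply] at h
        have : B v - v = 0 := h
        exact sub_eq_zero.mp this
      have hd0 : D v = v := by
        have h := congrArg (fun z : ((SA × SB) × SD) => (z.2 : X → ℚ)) hv
        simp only [hα, hE, LinearMap.prod_apply, Function.prod, LinearMap.codRestrict_apply,
          LinearMap.sub_apply, LinearMap.id_apply] at h
        have : v - D v = 0 := h
        exact (sub_eq_zero.mp this).symm
      have hv2 : ∀ t, v (g₂ t) = v t := fun t => congrFun hb0 t
      have hv1i : ∀ t, v (g₁⁻¹ t) = v t := fun t => congrFun hd0 t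
      have hv1 : ∀ t, v (g₁ t) = v t := by
        intro t
        have := hv1i (g₁ t)
        rw [Equiv.Perm.inv_def, Equiv.symm_apply_apply] at this
        exact this.symm
      have hv2i : ∀ t, v (g₂⁻¹ t) = v t := by
        intro t
        have := hv2 (g₂⁻¹ t)
        rw [Equiv.Perm.inv_def, Equiv.apply_symm_apply] at this
        exact this.symm
      have hv3 : ∀ t, v (g₃ t) = v t := by
        intro t
        have hg3 : g₃ = g₂⁻¹ * g₁⁻¹ := by
          rw [← hg, ← mul_assoc, inv_mul_cancel, one_mul]
        rw [hg3]
        simp only [Equiv.Perm.mul_apply]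
        rw [hv2i, hv1i]
      have hfix : ∀ g ∈ Subgroup.closure ({g₁, g₂, g₃} : Set (Equiv.Perm X)),
          ∀ t, v (g t) = v t := by
        intro g hgmem
        induction hgmem using Subgroup.closure_induction with
        | mem x hx =>
          simp only [Set.mem_insert_iff, Set.mem_singleton_iff] at hx
          rcases hx with rfl | rfl | rfl
          · exact hv1
          · exact hv2
          · exact hv3
        | one => intro t; simp
        | mul x y hx hy ihx ihy =>
          intro t
          simp only [Equiv.Perm.mul_apply]
          rw [ihx, ihy]
        | inv x hx ihx =>
          intro t
          have := ihx (x⁻¹ t)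
          rw [Equiv.Perm.inv_def, Equiv.apply_symm_apply] at this
          exact this.symm
      have hvconst : ∀ t, v t = v x₀ := by
        intro t
        obtain ⟨g, hgx⟩ := MulAction.exists_smul_eq
          (Subgroup.closure ({g₁, g₂, g₃} : Set (Equiv.Perm X))) x₀ t
        have hgx' : (g : Equiv.Perm X) x₀ = t := hgx
        rw [← hgx']
        exact hfix (g : Equiv.Perm X) g.2 x₀
      rw [Submodule.mem_span_singleton]
      refine ⟨v x₀, ?_⟩
      ext t
      simp [hvconst t]
    calc finrank ℚ (LinearMap.ker α) ≤ finrank ℚ (Submodule.span ℚ {(1 : X → ℚ)}) :=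
          Submodule.finrank_mono hle
      _ = 1 := finrank_span_singleton (by
          intro h
          have := congrFun h x₀
          norm_num at this)
  have hfinV : finrank ℚ (X → ℚ) = 100 := by
    rw [Module.finrank_pi, hX]
  have hrangeα : 99 ≤ finrank ℚ (LinearMap.range α) := by
    have := α.finrank_range_add_finrank_ker
    rw [hfinV] at this
    omega
  have hkerπ : 99 ≤ finrank ℚ (LinearMap.ker π) := by
    have hle : LinearMap.range α ≤ LinearMap.ker π := LinearMap.range_le_ker_iff.mpr hπα
    exact le_trans hrangeα (Submodule.finrank_mono hle)
  have hrangeπ : LinearMap.range π = S := by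
    rw [hπ, LinearMap.range_coprod, LinearMap.range_coprod, Submodule.range_subtype,
      Submodule.range_subtype, Submodule.range_subtype]
  -- dimension bounds for SA, SB, SD
  have hdim : ∀ (σ : Equiv.Perm X) (n k : ℕ), σ.cycleType = Multiset.replicate k n →
      finrank ℚ (LinearMap.range (Pmap σ - LinearMap.id)) + (100 - k * n + k) ≤ 100 := by
    intro σ n k hσ
    have hsupp : σ.support.card = k * n := by
      rw [← Equiv.Perm.sum_cycleType, hσ, Multiset.sum_replicate, smul_eq_mul]
    have hcyc : σ.cycleFactorsFinset.card = k := by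
      rw [card_cycleFactorsFinset, hσ, Multiset.card_replicate]
    have hk := ker_lb σ
    rw [hsupp, hcyc, hX] at hk
    have hrn := (Pmap σ - LinearMap.id).finrank_range_add_finrank_ker
    rw [hfinV] at hrn
    omega
  have hsupple : ∀ σ : Equiv.Perm X, σ.support.card ≤ 100 := by
    intro σ
    rw [← hX]
    exact le_trans (Finset.card_le_card (Finset.subset_univ _)) (le_of_eq (Finset.card_univ))
  have hDdim : finrank ℚ SD ≤ 40 := by
    have h1' : (g₁⁻¹).cycleType = Multiset.replicate 40 2 := by
      rw [Equiv.Perm.cycleType_inv, h₁]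
    have hh := hdim g₁⁻¹ 2 40 h1'
    rw [show LinearMap.range (Pmap g₁⁻¹ - LinearMap.id) = SD from rfl] at hh
    omega
  have hBdim : finrank ℚ SB ≤ 64 := by
    have hh := hdim g₂ 3 32 h₂
    rw [show LinearMap.range (Pmap g₂ - LinearMap.id) = SB from rfl] at hh
    omega
  have hAdim : finrank ℚ SA ≤ 84 := by
    have hh := hdim g₃ 7 14 h₃
    rw [show LinearMap.range (Pmap g₃ - LinearMap.id) = SA from rfl] at hh
    omega
  -- rank-nullity for π and the contradiction
  have hprodrank : finrank ℚ ((SA × SB) × SD) =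
      finrank ℚ SA + finrank ℚ SB + finrank ℚ SD := by
    rw [Module.finrank_prod, Module.finrank_prod]
  have hrn := π.finrank_range_add_finrank_ker
  rw [hrangeπ, hprodrank] at hrn
  omega
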